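/- Let X be a (q+1)-regular graph on n = q³+q²+q+1 vertices with loops, with least adjacency eigenvalue −sqrt(2q) and exactly q²+1 looped vertices (a polarity graph of the generalized quadrangle W(q)). Then every independent set S satisfies |S| ≤ (sqrt(2q) + sqrt(2q + 4(q²+1)(q+sqrt(2q)+1)/(q³+q²+q+1))) / (2(q+sqrt(2q)+1)/(q³+q²+q+1)). -/

import Mathlib

open Matrix Finset

set_option maxHeartbeats 1000000 in
/-- Bound for polarity graphs of the generalized quadrangle `W(q)`:
`(q+1)`-regular on `n = q³+q²+q+1` vertices, `q²+1` looped vertices, least adjacency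
eigenvalue `−√(2q)`; every independent set satisfies the stated bound. -/
theorem stmt16 (q : ℕ) (hq : 2 ≤ q) (n : ℕ) (hn : n = q ^ 3 + q ^ 2 + q + 1)
    (A : Matrix (Fin n) (Fin n) ℝ) (hsym : A.IsSymm)
    (h01 : ∀ i j, A i j = 0 ∨ A i j = 1)
    (hreg : ∀ i, ∑ j, A i j = (q : ℝ) + 1)
    (hloops : (∑ i, A i i) = (q : ℝ) ^ 2 + 1)
    (hτeig : ∃ v : Fin n → ℝ, v ≠ 0 ∧ A.mulVec v = (-Real.sqrt (2 * q)) • v)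
    (hτmin : ∀ (μ : ℝ) (v : Fin n → ℝ), v ≠ 0 → A.mulVec v = μ • v →
      -Real.sqrt (2 * q) ≤ μ)
    (S : Finset (Fin n)) (hind : ∀ i ∈ S, ∀ j ∈ S, i ≠ j → A i j = 0) :
    (S.card : ℝ) ≤
      (Real.sqrt (2 * q) + Real.sqrt (2 * (q : ℝ) + 4 * ((q : ℝ) ^ 2 + 1)
          * ((q : ℝ) + Real.sqrt (2 * q) + 1) / ((q : ℝ) ^ 3 + q ^ 2 + q + 1)))
        / (2 * ((q : ℝ) + Real.sqrt (2 * q) + 1)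
          / ((q : ℝ) ^ 3 + q ^ 2 + q + 1)) := by
  classical
  set τ := Real.sqrt (2 * q) with hτdef
  have hq1 : (1:ℝ) ≤ (q:ℝ) := by exact_mod_cast Nat.one_le_of_lt hq
  have hτ0 : 0 ≤ τ := Real.sqrt_nonneg _
  have hτsq : τ ^ 2 = 2 * q := Real.sq_sqrt (by positivity)
  set nr : ℝ := (q : ℝ) ^ 3 + q ^ 2 + q + 1 with hnrdef
  have hnrpos : 0 < nr := by positivity
  have hncast : (n : ℝ) = nr := by rw [hn]; push_cast; ring
  set k : ℝ := (q : ℝ) + 1 with hkdef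
  set a : ℝ := (S.card : ℝ) with hadef
  have ha0 : 0 ≤ a := Nat.cast_nonneg _
  -- Quadratic form bound from the least eigenvalue
  have hquad : ∀ x : Fin n → ℝ, 0 ≤ x ⬝ᵥ (A *ᵥ x) + τ * (x ⬝ᵥ x) := by
    have hBh : (A + τ • (1 : Matrix (Fin n) (Fin n) ℝ)).IsHermitian := by
      rw [Matrix.IsHermitian, conjTranspose_eq_transpose_of_trivial, transpose_add,
        transpose_smul, transpose_one, hsym]
    have hBpsd : (A + τ • (1 : Matrix (Fin n) (Fin n) ℝ)).PosSemidef := by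
      refine hBh.posSemidef_iff_eigenvalues_nonneg.mpr fun i => ?_
      have hvne : (⇑(hBh.eigenvectorBasis i) : Fin n → ℝ) ≠ 0 := by
        intro h; apply hBh.eigenvectorBasis.orthonormal.ne_zero i; ext j; simpa using congrFun h j
      have hm := hBh.mulVec_eigenvectorBasis i
      rw [add_mulVec, smul_mulVec, one_mulVec] at hm
      have hAv : A.mulVec (⇑(hBh.eigenvectorBasis i)) =
          (hBh.eigenvalues i - τ) • (⇑(hBh.eigenvectorBasis i)) := by
        rw [sub_smul, eq_sub_iff_add_eq]; exact hm
      have := hτmin _ _ hvne hAv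
      simp only [Pi.zero_apply]; linarith
    intro x
    have h := hBpsd.dotProduct_mulVec_nonneg x
    simp only [star_trivial] at h
    rw [add_mulVec, smul_mulVec, one_mulVec, dotProduct_add, dotProduct_smul,
      smul_eq_mul] at h
    exact h
  -- the test vector
  set t : ℝ := a / nr with htdef
  set χ : Fin n → ℝ := fun i => if i ∈ S then (1:ℝ) else 0 with hχ
  set x : Fin n → ℝ := fun i => χ i - t with hx
  have hsumχ : (∑ i, χ i) = a := by
    simp only [hχ]
    rw [Finset.sum_ite_mem, Finset.univ_inter, Finset.sum_const, nsmul_eq_mul, mul_one, hadef]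
  -- ‖x‖²
  have hP : x ⬝ᵥ x = a - 2 * t * a + t ^ 2 * n := by
    simp only [dotProduct, hx]
    have : ∀ i, (χ i - t) * (χ i - t) = χ i - 2 * t * χ i + t ^ 2 := by
      intro i
      have hsq : χ i * χ i = χ i := by
        simp only [hχ]; by_cases hi : i ∈ S <;> simp [hi]
      nlinarith [hsq]
    rw [Finset.sum_congr rfl fun i _ => this i]
    rw [Finset.sum_add_distrib, Finset.sum_sub_distrib, hsumχ, ← Finset.mul_sum, hsumχ]
    simp [mul_comm]
  -- quadratic form of x
  set L : ℝ := ∑ i ∈ S, A i i with hLdef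
  have hQ : x ⬝ᵥ (A *ᵥ x) = L - 2 * t * a * k + t ^ 2 * n * k := by
    have expand : x ⬝ᵥ (A *ᵥ x) =
        (∑ i, ∑ j, χ i * A i j * χ j) - t * (∑ i, ∑ j, χ i * A i j)
        - t * (∑ i, ∑ j, A i j * χ j) + t ^ 2 * (∑ i, ∑ j, A i j) := by
      simp only [hx, dotProduct, mulVec, dotProduct, Finset.mul_sum, ← Finset.sum_sub_distrib,
        ← Finset.sum_add_distrib]
      refine Finset.sum_congr rfl fun i _ => ?_
      refine Finset.sum_congr rfl fun j _ => ?_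
      ring
    have T1 : (∑ i, ∑ j, χ i * A i j * χ j) = L := by
      have h1 : ∀ i, ∑ j, χ i * A i j * χ j = if i ∈ S then A i i else 0 := by
        intro i
        by_cases hi : i ∈ S
        · simp only [hχ, hi, if_true, one_mul]
          have h2 : ∀ j, A i j * (if j ∈ S then (1:ℝ) else 0) =
              if j ∈ S then A i j else 0 := by
            intro j; by_cases hj : j ∈ S <;> simp [hj]
          simp only [h2]
          rw [Finset.sum_ite_mem, Finset.univ_inter]
          exact Finset.sum_eq_single i (fun j hj hne => hind i hi j hj (Ne.symm hne))
            (fun h => absurd hi h)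
        · simp [hχ, hi]
      rw [Finset.sum_congr rfl fun i _ => h1 i, Finset.sum_ite_mem, Finset.univ_inter, hLdef]
    have T2 : (∑ i, ∑ j, χ i * A i j) = a * k := by
      have h1 : ∀ i, ∑ j, χ i * A i j = if i ∈ S then k else 0 := by
        intro i; by_cases hi : i ∈ S <;> simp [hχ, hi, ← Finset.mul_sum, hreg i, hkdef]
      rw [Finset.sum_congr rfl fun i _ => h1 i, Finset.sum_ite_mem, Finset.univ_inter,
        Finset.sum_const, nsmul_eq_mul, hadef]
    have T3 : (∑ i, ∑ j, A i j * χ j) = a * k := by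
      rw [Finset.sum_comm]
      have h1 : ∀ j, ∑ i, A i j * χ j = if j ∈ S then k else 0 := by
        intro j; by_cases hj : j ∈ S
        · simp only [hχ, hj, if_true, mul_one]
          have h2 : ∀ i, A i j = A j i := fun i => hsym.apply j i
          simp only [h2]; rw [hreg j, hkdef]
        · simp [hχ, hj]
      rw [Finset.sum_congr rfl fun j _ => h1 j, Finset.sum_ite_mem, Finset.univ_inter,
        Finset.sum_const, nsmul_eq_mul, hadef]
    have T4 : (∑ i, ∑ j, A i j) = (n : ℝ) * k := by
      simp only [hreg, Finset.sum_const, Finset.card_univ, Fintype.card_fin, nsmul_eq_mul]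
    rw [expand, T1, T2, T3, T4]; ring
  -- bound on loops in S
  have hL : L ≤ (q : ℝ) ^ 2 + 1 := by
    rw [hLdef, ← hloops]
    refine Finset.sum_le_sum_of_subset_of_nonneg (Finset.subset_univ S) fun i _ _ => ?_
    rcases h01 i i with h | h <;> rw [h] <;> norm_num
  -- the key inequality
  have hkey : (k + τ) / nr * a ^ 2 ≤ τ * a + ((q : ℝ) ^ 2 + 1) := by
    have h := hquad x
    rw [hP, hQ, hncast] at h
    have hnr : nr ≠ 0 := ne_of_gt hnrpos
    have htnr : t * nr = a := div_mul_cancel₀ a hnr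
    have hk2 : (k + τ) / nr * a ^ 2 = (k + τ) * t ^ 2 * nr := by
      rw [← htnr]; field_simp
    rw [hk2, ← htnr]
    rw [← htnr] at h
    nlinarith [h, hL]
  -- finish with the quadratic root bound
  set c : ℝ := (k + τ) / nr with hcdef
  have hc0 : 0 < c := by
    apply div_pos _ hnrpos
    rw [hkdef]; linarith
  set D : ℝ := 2 * (q : ℝ) + 4 * ((q : ℝ) ^ 2 + 1) * ((q : ℝ) + τ + 1) / nr with hDdef
  have hDeq : D = τ ^ 2 + 4 * c * ((q : ℝ) ^ 2 + 1) := by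
    rw [hDdef, hτsq, hcdef, hkdef]; field_simp; ring
  have hD0 : 0 ≤ D := by
    rw [hDeq]; positivity
  set s : ℝ := Real.sqrt D with hsdef
  have hs0 : 0 ≤ s := Real.sqrt_nonneg _
  have hssq : s ^ 2 = D := Real.sq_sqrt hD0
  have hgoal : a ≤ (τ + s) / (2 * c) := by
    rw [le_div_iff₀ (by linarith : (0:ℝ) < 2 * c)]
    by_contra hcon
    push_neg at hcon
    have h2 : 0 < 2 * c * a - τ - s := by linarith [mul_comm a (2 * c)]
    have h3 : 0 < 2 * c * a - τ + s := by linarith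
    nlinarith [mul_pos h2 h3, hssq, hDeq,
      mul_le_mul_of_nonneg_left hkey (by linarith : (0:ℝ) ≤ 4 * c)]
  have hden : 2 * ((q : ℝ) + τ + 1) / nr = 2 * c := by
    rw [hcdef, hkdef]; ring
  rw [hden]
  exact hgoal
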